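/- Let G be a bridgeless graph and let v be a vertex of degree 3 with incident edges e₁, e₂, e₃, and let D be an orientation in which e₁, e₂, e₃ are all directed out of v (or all into v). If G admits a nowhere-zero ℤ₆-flow (D, φ) with φ(e₁) = 1, φ(e₂) = x and φ(e₃) = −1 − x (for some 1 ≤ x ≤ 4), then G admits a nowhere-zero integer 6-flow (D, φ') with φ'(e₁) = 1, φ'(e₂) = x and φ'(e₃) = −1 − x. -/

import Mathlib

open Finset SimpleGraph

attribute [local instance] Classical.propDecidable

variable {V : Type}

/-- `σ` is a valid `±1` signature on the edges of `G`. -/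
def IsSignature (G : SimpleGraph V) (σ : Sym2 V → ℤ) : Prop :=
  ∀ e ∈ G.edgeSet, σ e = 1 ∨ σ e = -1

/-- The set of negative edges of the signed graph `(G, σ)`. -/
def NegEdges (G : SimpleGraph V) (σ : Sym2 V → ℤ) : Set (Sym2 V) :=
  {e | e ∈ G.edgeSet ∧ σ e = -1}

/-- A bidirected orientation of the signed graph `(G, σ)`: `τ v e = 1` means that the
half-edge of `e` at `v` points towards `v`, and `τ v e = -1` that it points away from `v`.
On a positive edge the two half-edges are directed consistently, while on a negative edge
both half-edges point outwards (extroverted) or both point inwards (introverted). -/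
def IsOrientation (G : SimpleGraph V) (σ : Sym2 V → ℤ) (τ : V → Sym2 V → ℤ) : Prop :=
  (∀ v e, τ v e = 1 ∨ τ v e = -1) ∧
  ∀ u v, G.Adj u v → τ u s(u, v) * τ v s(u, v) = - σ s(u, v)

/-- `(τ, φ)` is an integer-valued flow on the signed graph `(G, σ)`:
Kirchhoff's law holds at every vertex. -/
def IsFlow [Fintype V] (G : SimpleGraph V) (σ : Sym2 V → ℤ)
    (τ : V → Sym2 V → ℤ) (φ : Sym2 V → ℤ) : Prop :=
  IsOrientation G σ τ ∧
    ∀ v : V, (∑ w : V, if G.Adj v w then τ v s(v, w) * φ s(v, w) else 0) = 0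

/-- `(τ, φ)` is a nowhere-zero `k`-flow on `(G, σ)`. -/
def IsNZFlow [Fintype V] (G : SimpleGraph V) (σ : Sym2 V → ℤ) (k : ℤ)
    (τ : V → Sym2 V → ℤ) (φ : Sym2 V → ℤ) : Prop :=
  IsFlow G σ τ φ ∧ ∀ e ∈ G.edgeSet, 0 < |φ e| ∧ |φ e| < k

/-- A signed graph is flow-admissible if it admits a nowhere-zero `k`-flow for some `k`. -/
def FlowAdmissible [Fintype V] (G : SimpleGraph V) (σ : Sym2 V → ℤ) : Prop :=
  ∃ (k : ℤ) (τ : V → Sym2 V → ℤ) (φ : Sym2 V → ℤ), IsNZFlow G σ k τ φ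

/-- The flow number `F(G, σ)`: the least `k` admitting a nowhere-zero `k`-flow. -/
noncomputable def flowNumber [Fintype V] (G : SimpleGraph V) (σ : Sym2 V → ℤ) : ℕ :=
  sInf {k : ℕ | ∃ τ φ, IsNZFlow G σ (k : ℤ) τ φ}

/-- An edge-cut of `G`: the set of edges crossing a nontrivial vertex partition. -/
def IsEdgeCut (G : SimpleGraph V) (X : Set (Sym2 V)) : Prop :=
  ∃ S : Set V, S.Nonempty ∧ Sᶜ.Nonempty ∧
    X = {e | e ∈ G.edgeSet ∧ ∃ a ∈ S, ∃ b ∈ Sᶜ, e = s(a, b)}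

/-- The all-positive signature. -/
def allPos : Sym2 V → ℤ := fun _ => 1

/-- `G` is cubic (3-regular). -/
def CubicGraph (G : SimpleGraph V) : Prop := ∀ v : V, (G.neighborSet v).ncard = 3

/-- `G` has no bridge. -/
def Bridgeless (G : SimpleGraph V) : Prop := ∀ e ∈ G.edgeSet, ¬ G.IsBridge e

/-- A walk is directed (with respect to the orientation `τ` of `(G, σ)`) if every dart of
the walk traverses a positive edge in the direction of its orientation. -/
def IsDirectedWalk {G : SimpleGraph V} (σ : Sym2 V → ℤ) (τ : V → Sym2 V → ℤ) {u v : V}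
    (p : G.Walk u v) : Prop :=
  ∀ d ∈ p.darts, σ s(d.toProd.1, d.toProd.2) = 1 ∧
    τ d.toProd.2 s(d.toProd.1, d.toProd.2) = 1

/-- `M` is a perfect matching (1-factor) of `G`. -/
def IsPM (G : SimpleGraph V) (M : Set (Sym2 V)) : Prop :=
  M ⊆ G.edgeSet ∧ ∀ v : V, ∃! e, e ∈ M ∧ v ∈ e

/-- `c` is a proper 3-edge-coloring of `G`. -/
def IsProper3EdgeColoring (G : SimpleGraph V) (c : Sym2 V → Fin 3) : Prop :=
  ∀ e₁ ∈ G.edgeSet, ∀ e₂ ∈ G.edgeSet, e₁ ≠ e₂ → (∃ w, w ∈ e₁ ∧ w ∈ e₂) → c e₁ ≠ c e₂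


section Stmt9Aux

variable [Fintype V] (G : SimpleGraph V) (τ : V → Sym2 V → ℤ)

/-- divergence of `φ` at `w` -/
noncomputable def dvg (φ : Sym2 V → ℤ) (w : V) : ℤ :=
  ∑ z : V, if G.Adj w z then τ w s(w, z) * φ s(w, z) else 0

/-- total excess -/
noncomputable def Kk (φ : Sym2 V → ℤ) : ℕ := ∑ w : V, (dvg G τ φ w).natAbs

variable (ψ : Sym2 V → ZMod 6) (e₁ e₂ e₃ : Sym2 V) (x : ℤ)

def Good (φ : Sym2 V → ℤ) : Prop :=
  (∀ e ∈ G.edgeSet, ((φ e : ZMod 6) = ψ e) ∧ 0 < |φ e| ∧ |φ e| < 6) ∧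
  φ e₁ = 1 ∧ φ e₂ = x ∧ φ e₃ = -1 - x

def Rrel (φ : Sym2 V → ℤ) (a b : V) : Prop :=
  G.Adj a b ∧ s(a, b) ≠ e₁ ∧ s(a, b) ≠ e₂ ∧ s(a, b) ≠ e₃ ∧ 0 < τ a s(a, b) * φ s(a, b)

lemma tau_opp (hτ : IsOrientation G allPos τ) {a b : V} (h : G.Adj a b) :
    τ b s(a, b) = - τ a s(a, b) := by
  have h2 := hτ.2 a b h
  simp only [allPos] at h2
  rcases hτ.1 a s(a, b) with h1 | h1 <;> rcases hτ.1 b s(a, b) with h3 | h3 <;>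
    rw [h1, h3] at h2 ⊢ <;> omega

lemma tau_sq (hτ : IsOrientation G allPos τ) (w : V) (e : Sym2 V) : τ w e * τ w e = 1 := by
  rcases hτ.1 w e with h | h <;> rw [h] <;> norm_num

lemma dvg_dvd (hK : ∀ w : V, (∑ z : V, if G.Adj w z then (τ w s(w, z) : ZMod 6) * ψ s(w, z) else 0) = 0)
    (φ : Sym2 V → ℤ) (hG : Good G ψ e₁ e₂ e₃ x φ) (w : V) : (6 : ℤ) ∣ dvg G τ φ w := by
  have key : ((dvg G τ φ w : ℤ) : ZMod 6) = 0 := by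
    unfold dvg
    rw [Int.cast_sum, ← hK w]
    refine Finset.sum_congr rfl fun z _ => ?_
    by_cases h : G.Adj w z
    · simp only [if_pos h]
      push_cast
      rw [(hG.1 _ (G.mem_edgeSet.mpr h)).1]
    · simp [h]
  exact_mod_cast (ZMod.intCast_zmod_eq_zero_iff_dvd _ 6).mp key

lemma sum_antisym (hτ : IsOrientation G allPos τ) (φ : Sym2 V → ℤ) (T : Finset V) :
    ∑ w ∈ T, ∑ z ∈ T, (if G.Adj w z then τ w s(w, z) * φ s(w, z) else 0) = 0 := by
  rw [← Finset.sum_product']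
  apply Finset.sum_involution (fun p _ => (p.2, p.1))
  · intro p hp
    by_cases h : G.Adj p.1 p.2
    · have h' : G.Adj p.2 p.1 := h.symm
      have hsym : s(p.2, p.1) = s(p.1, p.2) := Sym2.eq_swap
      simp only [if_pos h, if_pos h', hsym]
      rw [tau_opp G τ hτ h]; ring
    · have h' : ¬ G.Adj p.2 p.1 := fun hh => h hh.symm
      simp [h, h']
  · intro p hp hf hswap
    have h1 : p.1 = p.2 := congrArg Prod.snd hswap
    apply hf
    have : ¬ G.Adj p.1 p.2 := by rw [h1]; exact G.irrefl
    simp [this]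
  · intro p hp
    simp only [Finset.mem_product] at hp ⊢
    exact ⟨hp.2, hp.1⟩
  · intro p hp; rfl

lemma dvg_total (hτ : IsOrientation G allPos τ) (φ : Sym2 V → ℤ) :
    ∑ w : V, dvg G τ φ w = 0 := by
  unfold dvg
  exact sum_antisym G τ hτ φ Finset.univ

lemma exists_pos (hτ : IsOrientation G allPos τ) (φ : Sym2 V → ℤ) (hne : Kk G τ φ ≠ 0) :
    ∃ u, 0 < dvg G τ φ u := by
  by_contra h
  push_neg at h
  have h0 : ∀ w, dvg G τ φ w = 0 := by
    have := dvg_total G τ hτ φ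
    intro w
    exact (Finset.sum_eq_zero_iff_of_nonpos (fun i _ => h i)).mp this w (Finset.mem_univ w)
  apply hne
  unfold Kk
  exact Finset.sum_eq_zero fun w _ => by simp [h0 w]


lemma push_good (hτ : IsOrientation G allPos τ) {φ : Sym2 V → ℤ}
    (hG : Good G ψ e₁ e₂ e₃ x φ) {a b : V} (h : Rrel G τ e₁ e₂ e₃ φ a b) :
    ∃ φ₁ : Sym2 V → ℤ, Good G ψ e₁ e₂ e₃ x φ₁ ∧
      (∀ e', e' ≠ s(a, b) → φ₁ e' = φ e') ∧
      (∀ w, dvg G τ φ₁ w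
        = dvg G τ φ w + (if w = a then -6 else 0) + (if w = b then 6 else 0)) := by
  obtain ⟨hadj, hA1, hA2, hA3, hpos⟩ := h
  have hab : a ≠ b := G.ne_of_adj hadj
  set t := τ a s(a, b) with ht_def
  have ht : t = 1 ∨ t = -1 := hτ.1 a s(a, b)
  refine ⟨Function.update φ s(a, b) (φ s(a, b) - 6 * t), ?_, ?_, ?_⟩
  · constructor
    · intro e' he'
      by_cases he : e' = s(a, b)
      · subst he
        rw [Function.update_self]
        obtain ⟨hcast, habs0, habs6⟩ := hG.1 _ he'
        constructor
        · push_cast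
          rw [hcast]
          have h6 : ((6 : ℤ) : ZMod 6) = 0 := by decide
          push_cast at h6 ⊢
          rw [h6]; ring
        · rw [abs_pos] at habs0 ⊢
          rw [abs_lt] at habs6 ⊢
          rcases ht with h1 | h1 <;> rw [h1] at hpos ⊢ <;>
            constructor <;> omega
      · rw [Function.update_of_ne he]
        exact hG.1 _ he'
    · refine ⟨?_, ?_, ?_⟩
      · rw [Function.update_of_ne (fun hh => hA1 hh.symm), hG.2.1]
      · rw [Function.update_of_ne (fun hh => hA2 hh.symm), hG.2.2.1]
      · rw [Function.update_of_ne (fun hh => hA3 hh.symm), hG.2.2.2]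
  · intro e' he'
    exact Function.update_of_ne he' _ _
  · intro w
    unfold dvg
    have key : ∀ z : V, (if G.Adj w z then τ w s(w, z) * Function.update φ s(a, b) (φ s(a, b) - 6 * t) s(w, z) else 0)
        = (if G.Adj w z then τ w s(w, z) * φ s(w, z) else 0)
          + ((if w = a ∧ z = b then (-6 : ℤ) else 0) + (if w = b ∧ z = a then (6 : ℤ) else 0)) := by
      intro z
      by_cases hz : G.Adj w z
      · rw [if_pos hz, if_pos hz]
        by_cases hs : s(w, z) = s(a, b)
        · rw [hs, Function.update_self]
          rw [Sym2.eq_iff] at hs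
          rcases hs with ⟨h1, h2⟩ | ⟨h1, h2⟩
          · rw [h1, h2]
            rw [if_pos ⟨rfl, rfl⟩, if_neg (fun hh => hab hh.1)]
            rw [← ht_def]
            have hsq : t * t = 1 := by rw [ht_def]; exact tau_sq G τ hτ a s(a, b)
            nlinarith [hsq]
          · rw [h1, h2]
            rw [if_neg (fun hh => hab hh.2), if_pos ⟨rfl, rfl⟩]
            have hopp : τ b s(a, b) = - τ a s(a, b) := tau_opp G τ hτ hadj
            rw [hopp, ← ht_def]
            have hsq : t * t = 1 := by rw [ht_def]; exact tau_sq G τ hτ a s(a, b)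
            nlinarith [hsq]
        · rw [Function.update_of_ne hs]
          rw [if_neg, if_neg]
          · ring
          · rintro ⟨h1, h2⟩
            apply hs
            rw [h1, h2]
            exact Sym2.eq_swap
          · rintro ⟨h1, h2⟩
            apply hs
            rw [h1, h2]
      · rw [if_neg hz, if_neg hz]
        have hza : ¬ (w = a ∧ z = b) := by
          rintro ⟨h1, h2⟩; rw [h1, h2] at hz; exact hz hadj
        have hzb : ¬ (w = b ∧ z = a) := by
          rintro ⟨h1, h2⟩; rw [h1, h2] at hz; exact hz hadj.symm
        rw [if_neg hza, if_neg hzb]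
        ring
    have hs1 : (∑ z : V, if w = a ∧ z = b then (-6 : ℤ) else 0) = (if w = a then (-6 : ℤ) else 0) := by
      by_cases hwa : w = a
      · simp [hwa]
      · simp [hwa]
    have hs2 : (∑ z : V, if w = b ∧ z = a then (6 : ℤ) else 0) = (if w = b then (6 : ℤ) else 0) := by
      by_cases hwb : w = b
      · simp [hwb]
      · simp [hwb]
    rw [Finset.sum_congr rfl fun z _ => key z, Finset.sum_add_distrib, Finset.sum_add_distrib, hs1, hs2]
    ring

lemma Kk_push (φ φ₁ : Sym2 V → ℤ) {a b : V} (hab : a ≠ b)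
    (hd : ∀ w, dvg G τ φ₁ w = dvg G τ φ w + (if w = a then -6 else 0) + (if w = b then 6 else 0))
    (ha : 6 ≤ dvg G τ φ a) :
    (dvg G τ φ b ≤ -6 → Kk G τ φ₁ < Kk G τ φ) ∧
    (0 ≤ dvg G τ φ b → Kk G τ φ₁ = Kk G τ φ) := by
  have key : (Kk G τ φ₁ : ℤ) = (Kk G τ φ : ℤ)
      + ((|dvg G τ φ a - 6| - |dvg G τ φ a|) + (|dvg G τ φ b + 6| - |dvg G τ φ b|)) := by
    unfold Kk
    push_cast [← Int.abs_eq_natAbs]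
    have term : ∀ w : V, |dvg G τ φ₁ w| = |dvg G τ φ w|
        + ((if w = a then |dvg G τ φ a - 6| - |dvg G τ φ a| else 0)
          + (if w = b then |dvg G τ φ b + 6| - |dvg G τ φ b| else 0)) := by
      intro w
      rw [hd w]
      by_cases hwa : w = a
      · subst hwa
        rw [if_pos rfl, if_pos rfl, if_neg hab, if_neg hab]
        have : dvg G τ φ w + -6 + 0 = dvg G τ φ w - 6 := by ring
        rw [this]; ring
      · by_cases hwb : w = b
        · subst hwb
          rw [if_neg hwa, if_pos rfl, if_neg hwa, if_pos rfl]
          have : dvg G τ φ w + 0 + 6 = dvg G τ φ w + 6 := by ring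
          rw [this]; ring
        · rw [if_neg hwa, if_neg hwb, if_neg hwa, if_neg hwb]
          ring_nf
    rw [Finset.sum_congr rfl fun w _ => term w, Finset.sum_add_distrib,
      Finset.sum_add_distrib,
      Finset.sum_ite_eq' Finset.univ a, Finset.sum_ite_eq' Finset.univ b,
      if_pos (Finset.mem_univ a), if_pos (Finset.mem_univ b)]
  constructor
  · intro hb
    have h1 : |dvg G τ φ a - 6| = dvg G τ φ a - 6 := abs_of_nonneg (by linarith)
    have h2 : |dvg G τ φ a| = dvg G τ φ a := abs_of_nonneg (by linarith)
    have h3 : |dvg G τ φ b + 6| = -(dvg G τ φ b + 6) := abs_of_nonpos (by linarith)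
    have h4 : |dvg G τ φ b| = -(dvg G τ φ b) := abs_of_nonpos (by linarith)
    have : (Kk G τ φ₁ : ℤ) < (Kk G τ φ : ℤ) := by
      rw [key, h1, h2, h3, h4]; linarith
    exact_mod_cast this
  · intro hb
    have h1 : |dvg G τ φ a - 6| = dvg G τ φ a - 6 := abs_of_nonneg (by linarith)
    have h2 : |dvg G τ φ a| = dvg G τ φ a := abs_of_nonneg (by linarith)
    have h3 : |dvg G τ φ b + 6| = dvg G τ φ b + 6 := abs_of_nonneg (by linarith)
    have h4 : |dvg G τ φ b| = dvg G τ φ b := abs_of_nonneg hb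
    have : (Kk G τ φ₁ : ℤ) = (Kk G τ φ : ℤ) := by
      rw [key, h1, h2, h3, h4]; ring
    exact_mod_cast this


lemma dvg_v (v a₁ a₂ a₃ : V)
    (he₁ : e₁ = s(v, a₁)) (he₂ : e₂ = s(v, a₂)) (he₃ : e₃ = s(v, a₃))
    (ha₁ : G.Adj v a₁) (ha₂ : G.Adj v a₂) (ha₃ : G.Adj v a₃)
    (h12 : a₁ ≠ a₂) (h13 : a₁ ≠ a₃) (h23 : a₂ ≠ a₃)
    (hnbr : ∀ z, G.Adj v z → z = a₁ ∨ z = a₂ ∨ z = a₃)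
    (ε : ℤ) (hτv : τ v e₁ = ε ∧ τ v e₂ = ε ∧ τ v e₃ = ε)
    (φ : Sym2 V → ℤ) (hG : Good G ψ e₁ e₂ e₃ x φ) :
    dvg G τ φ v = 0 := by
  unfold dvg
  rw [← Finset.sum_subset (Finset.subset_univ ({a₁, a₂, a₃} : Finset V))
    (fun z _ hz => by
      rw [if_neg]
      intro hadj
      rcases hnbr z hadj with h | h | h <;> simp [h] at hz)]
  rw [show ({a₁, a₂, a₃} : Finset V) = insert a₁ (insert a₂ {a₃}) from rfl]
  rw [Finset.sum_insert (by simp [h12, h13]), Finset.sum_insert (by simp [h23]),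
    Finset.sum_singleton]
  rw [if_pos ha₁, if_pos ha₂, if_pos ha₃, ← he₁, ← he₂, ← he₃,
    hτv.1, hτv.2.1, hτv.2.2, hG.2.1, hG.2.2.1, hG.2.2.2]
  ring

lemma reach (hτ : IsOrientation G allPos τ)
    (v a₁ a₂ a₃ : V)
    (he₁ : e₁ = s(v, a₁)) (he₂ : e₂ = s(v, a₂)) (he₃ : e₃ = s(v, a₃))
    (ha₁ : G.Adj v a₁) (ha₂ : G.Adj v a₂) (ha₃ : G.Adj v a₃)
    (h12 : a₁ ≠ a₂) (h13 : a₁ ≠ a₃) (h23 : a₂ ≠ a₃)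
    (hnbr : ∀ z, G.Adj v z → z = a₁ ∨ z = a₂ ∨ z = a₃)
    (ε : ℤ) (hε : ε = 1 ∨ ε = -1)
    (hτv : τ v e₁ = ε ∧ τ v e₂ = ε ∧ τ v e₃ = ε)
    (hx1 : 1 ≤ x) (hx4 : x ≤ 4)
    (φ : Sym2 V → ℤ) (hG : Good G ψ e₁ e₂ e₃ x φ)
    (hdvd : ∀ w, (6 : ℤ) ∣ dvg G τ φ w)
    (u : V) (hu : 0 < dvg G τ φ u) :
    ∃ w, Relation.ReflTransGen (Rrel G τ e₁ e₂ e₃ φ) u w ∧ dvg G τ φ w < 0 := by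
  have hdv : dvg G τ φ v = 0 :=
    dvg_v G τ ψ e₁ e₂ e₃ x v a₁ a₂ a₃ he₁ he₂ he₃ ha₁ ha₂ ha₃ h12 h13 h23 hnbr ε hτv φ hG
  by_contra hno
  push_neg at hno
  set R := Rrel G τ e₁ e₂ e₃ φ with hR
  set S : Finset V := Finset.univ.filter (fun w => Relation.ReflTransGen R u w) with hS
  have huS : u ∈ S := by
    simp only [hS, Finset.mem_filter, Finset.mem_univ, true_and]
    exact Relation.ReflTransGen.refl
  have hvS : v ∉ S := by
    simp only [hS, Finset.mem_filter, Finset.mem_univ, true_and]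
    intro hrtg
    rcases Relation.ReflTransGen.cases_tail hrtg with h | ⟨c, _, hcv⟩
    · rw [← h] at hu; rw [hdv] at hu; exact lt_irrefl 0 hu
    · obtain ⟨hadj, hA1, hA2, hA3, _⟩ := hcv
      rcases hnbr c hadj.symm with h | h | h
      · exact hA1 (by rw [he₁, h]; exact Sym2.eq_swap)
      · exact hA2 (by rw [he₂, h]; exact Sym2.eq_swap)
      · exact hA3 (by rw [he₃, h]; exact Sym2.eq_swap)
  have hlow : (6 : ℤ) ≤ ∑ w ∈ S, dvg G τ φ w := by
    rw [← Finset.add_sum_erase S _ huS]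
    have h1 : (6 : ℤ) ≤ dvg G τ φ u := Int.le_of_dvd hu (hdvd u)
    have h2 : (0 : ℤ) ≤ ∑ w ∈ S.erase u, dvg G τ φ w := by
      apply Finset.sum_nonneg
      intro w hw
      have hwS : w ∈ S := Finset.mem_of_mem_erase hw
      simp only [hS, Finset.mem_filter] at hwS
      exact hno w hwS.2
    linarith
  have hsplit : ∑ w ∈ S, dvg G τ φ w
      = (∑ w ∈ S, ∑ z ∈ S, (if G.Adj w z then τ w s(w, z) * φ s(w, z) else 0))
      + (∑ w ∈ S, ∑ z ∈ (Finset.univ \ S), (if G.Adj w z then τ w s(w, z) * φ s(w, z) else 0)) := by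
    unfold dvg
    rw [← Finset.sum_add_distrib]
    refine Finset.sum_congr rfl fun w _ => ?_
    rw [add_comm]
    exact (Finset.sum_sdiff (Finset.subset_univ S)).symm
  have hzero := sum_antisym G τ hτ φ S
  -- bound the boundary sum
  set g : V × V → ℤ := fun p =>
    (if p = (a₁, v) then -ε * 1 else 0) + (if p = (a₂, v) then -ε * x else 0)
      + (if p = (a₃, v) then -ε * (-1 - x) else 0) with hg
  have hbound : ∑ w ∈ S, ∑ z ∈ (Finset.univ \ S), (if G.Adj w z then τ w s(w, z) * φ s(w, z) else 0) ≤ 5 := by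
    rw [← Finset.sum_product']
    have hle : ∀ p ∈ S ×ˢ (Finset.univ \ S),
        (if G.Adj p.1 p.2 then τ p.1 s(p.1, p.2) * φ s(p.1, p.2) else 0) ≤ g p := by
      rintro ⟨w, z⟩ hp
      simp only [Finset.mem_product, Finset.mem_sdiff, Finset.mem_univ, true_and] at hp
      obtain ⟨hwS, hzS⟩ := hp
      have hwRTG : Relation.ReflTransGen R u w := by
        simp only [hS, Finset.mem_filter] at hwS; exact hwS.2
      have hwv : w ≠ v := fun h => hvS (h ▸ hwS)
      by_cases hadj : G.Adj w z
      · rw [if_pos hadj]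
        have hgen : ∀ (i : Fin 3), True := fun _ => trivial
        by_cases hs1 : s(w, z) = e₁
        · rw [he₁, Sym2.eq_iff] at hs1
          rcases hs1 with ⟨h1, h2⟩ | ⟨h1, h2⟩
          · exact absurd h1 hwv
          · have hpr : ((w, z) : V × V) = (a₁, v) := by rw [h1, h2]
            have hval : τ w s(w, z) * φ s(w, z) = -ε * 1 := by
              rw [h1, h2]
              have hsw : s(a₁, v) = s(v, a₁) := Sym2.eq_swap
              rw [hsw, ← he₁]
              have hopp : τ a₁ s(v, a₁) = - τ v s(v, a₁) := tau_opp G τ hτ ha₁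
              rw [← he₁] at hopp
              rw [hopp, hτv.1, hG.2.1]
            have hn2 : ((a₁, v) : V × V) ≠ (a₂, v) := by simp [h12]
            have hn3 : ((a₁, v) : V × V) ≠ (a₃, v) := by simp [h13]
            rw [hval]
            simp only [hg, hpr]
            rw [if_neg hn2, if_neg hn3]
            simp
        · by_cases hs2 : s(w, z) = e₂
          · rw [he₂, Sym2.eq_iff] at hs2
            rcases hs2 with ⟨h1, h2⟩ | ⟨h1, h2⟩
            · exact absurd h1 hwv
            · have hpr : ((w, z) : V × V) = (a₂, v) := by rw [h1, h2]
              have hval : τ w s(w, z) * φ s(w, z) = -ε * x := by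
                rw [h1, h2]
                have hsw : s(a₂, v) = s(v, a₂) := Sym2.eq_swap
                rw [hsw, ← he₂]
                have hopp : τ a₂ s(v, a₂) = - τ v s(v, a₂) := tau_opp G τ hτ ha₂
                rw [← he₂] at hopp
                rw [hopp, hτv.2.1, hG.2.2.1]
              have hn1 : ((a₂, v) : V × V) ≠ (a₁, v) := by simp [h12.symm]
              have hn3 : ((a₂, v) : V × V) ≠ (a₃, v) := by simp [h23]
              rw [hval]
              simp only [hg, hpr]
              rw [if_neg hn1, if_neg hn3]
              simp
          · by_cases hs3 : s(w, z) = e₃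
            · rw [he₃, Sym2.eq_iff] at hs3
              rcases hs3 with ⟨h1, h2⟩ | ⟨h1, h2⟩
              · exact absurd h1 hwv
              · have hpr : ((w, z) : V × V) = (a₃, v) := by rw [h1, h2]
                have hval : τ w s(w, z) * φ s(w, z) = -ε * (-1 - x) := by
                  rw [h1, h2]
                  have hsw : s(a₃, v) = s(v, a₃) := Sym2.eq_swap
                  rw [hsw, ← he₃]
                  have hopp : τ a₃ s(v, a₃) = - τ v s(v, a₃) := tau_opp G τ hτ ha₃
                  rw [← he₃] at hopp
                  rw [hopp, hτv.2.2, hG.2.2.2]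
                have hn1 : ((a₃, v) : V × V) ≠ (a₁, v) := by simp [h13.symm]
                have hn2 : ((a₃, v) : V × V) ≠ (a₂, v) := by simp [h23.symm]
                rw [hval]
                simp only [hg, hpr]
                rw [if_neg hn1, if_neg hn2]
                simp
            · -- non-special boundary edge: value must be ≤ 0
              have hflow : τ w s(w, z) * φ s(w, z) ≤ 0 := by
                by_contra hc
                push_neg at hc
                have : Relation.ReflTransGen R u z :=
                  hwRTG.tail ⟨hadj, hs1, hs2, hs3, hc⟩
                exact hzS (by simp [hS, this])
              have hg0 : g (w, z) = 0 := by
                simp only [hg]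
                have hn1 : ((w, z) : V × V) ≠ (a₁, v) := by
                  rintro h
                  have hw' : w = a₁ := congrArg Prod.fst h
                  have hz' : z = v := congrArg Prod.snd h
                  apply hs1
                  rw [hw', hz', he₁]
                  exact Sym2.eq_swap
                have hn2 : ((w, z) : V × V) ≠ (a₂, v) := by
                  rintro h
                  have hw' : w = a₂ := congrArg Prod.fst h
                  have hz' : z = v := congrArg Prod.snd h
                  apply hs2
                  rw [hw', hz', he₂]
                  exact Sym2.eq_swap
                have hn3 : ((w, z) : V × V) ≠ (a₃, v) := by
                  rintro h
                  have hw' : w = a₃ := congrArg Prod.fst h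
                  have hz' : z = v := congrArg Prod.snd h
                  apply hs3
                  rw [hw', hz', he₃]
                  exact Sym2.eq_swap
                rw [if_neg hn1, if_neg hn2, if_neg hn3]
                ring
              rw [hg0]
              exact hflow
      · rw [if_neg hadj]
        have hg0 : g (w, z) = 0 := by
          simp only [hg]
          have hn1 : ((w, z) : V × V) ≠ (a₁, v) := by
            rintro h
            have hw' : w = a₁ := congrArg Prod.fst h
            have hz' : z = v := congrArg Prod.snd h
            rw [hw', hz'] at hadj
            exact hadj ha₁.symm
          have hn2 : ((w, z) : V × V) ≠ (a₂, v) := by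
            rintro h
            have hw' : w = a₂ := congrArg Prod.fst h
            have hz' : z = v := congrArg Prod.snd h
            rw [hw', hz'] at hadj
            exact hadj ha₂.symm
          have hn3 : ((w, z) : V × V) ≠ (a₃, v) := by
            rintro h
            have hw' : w = a₃ := congrArg Prod.fst h
            have hz' : z = v := congrArg Prod.snd h
            rw [hw', hz'] at hadj
            exact hadj ha₃.symm
          rw [if_neg hn1, if_neg hn2, if_neg hn3]
          ring
        rw [hg0]
    calc ∑ p ∈ S ×ˢ (Finset.univ \ S), (if G.Adj p.1 p.2 then τ p.1 s(p.1, p.2) * φ s(p.1, p.2) else 0)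
        ≤ ∑ p ∈ S ×ˢ (Finset.univ \ S), g p := Finset.sum_le_sum hle
      _ ≤ 5 := by
          simp only [hg]
          rw [Finset.sum_add_distrib, Finset.sum_add_distrib,
            Finset.sum_ite_eq' _ ((a₁, v) : V × V), Finset.sum_ite_eq' _ ((a₂, v) : V × V),
            Finset.sum_ite_eq' _ ((a₃, v) : V × V)]
          split_ifs <;> rcases hε with rfl | rfl <;> linarith
  rw [hsplit, hzero, zero_add] at hlow
  linarith


lemma chain_mono {R R' : V → V → Prop} :
    ∀ {a : V} {l : List V}, List.Chain R a l →
      (∀ p q, p ∈ a :: l → q ∈ l → R p q → R' p q) → List.Chain R' a l := by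
  intro a l
  induction l generalizing a with
  | nil => intro _ _; exact List.Chain.nil
  | cons b t ih =>
    intro h hmem
    simp only [List.Chain, List.chain_cons] at h ⊢
    exact ⟨hmem a b (by simp) (by simp) h.1,
      ih h.2 fun p q hp hq hpq =>
        hmem p q (List.mem_cons_of_mem a hp) (List.mem_cons_of_mem b hq) hpq⟩

lemma descend_single (hK : ∀ w : V, (∑ z : V, if G.Adj w z then (τ w s(w, z) : ZMod 6) * ψ s(w, z) else 0) = 0)
    (hτ : IsOrientation G allPos τ)
    {φ : Sym2 V → ℤ} (hG : Good G ψ e₁ e₂ e₃ x φ) {u w : V}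
    (h : Rrel G τ e₁ e₂ e₃ φ u w) (hu : 0 < dvg G τ φ u) (hw : dvg G τ φ w < 0) :
    ∃ φ', Good G ψ e₁ e₂ e₃ x φ' ∧ Kk G τ φ' < Kk G τ φ := by
  obtain ⟨φ₁, hG₁, _, hd⟩ := push_good G τ ψ e₁ e₂ e₃ x hτ hG h
  have hab : u ≠ w := G.ne_of_adj h.1
  have ha : 6 ≤ dvg G τ φ u := Int.le_of_dvd hu (dvg_dvd G τ ψ e₁ e₂ e₃ x hK φ hG u)
  have hb : dvg G τ φ w ≤ -6 := by
    have h6 : (6 : ℤ) ≤ -dvg G τ φ w :=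
      Int.le_of_dvd (by linarith) ((dvg_dvd G τ ψ e₁ e₂ e₃ x hK φ hG w).neg_right)
    linarith
  exact ⟨φ₁, hG₁, (Kk_push G τ φ φ₁ hab hd ha).1 hb⟩

lemma descend (hK : ∀ w : V, (∑ z : V, if G.Adj w z then (τ w s(w, z) : ZMod 6) * ψ s(w, z) else 0) = 0)
    (hτ : IsOrientation G allPos τ) :
    ∀ (n : ℕ) (φ : Sym2 V → ℤ), Good G ψ e₁ e₂ e₃ x φ →
      ∀ (u w : V) (l : List V), l.length ≤ n →
        List.Chain (Rrel G τ e₁ e₂ e₃ φ) u (l ++ [w]) →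
        0 < dvg G τ φ u → dvg G τ φ w < 0 →
        ∃ φ', Good G ψ e₁ e₂ e₃ x φ' ∧ Kk G τ φ' < Kk G τ φ := by
  intro n
  induction n with
  | zero =>
    intro φ hG u w l hl hchain hu hw
    have hnil : l = [] := List.length_eq_zero_iff.mp (Nat.le_zero.mp hl)
    subst hnil
    simp only [List.nil_append, List.Chain, List.chain_cons] at hchain
    exact descend_single G τ ψ e₁ e₂ e₃ x hK hτ hG hchain.1 hu hw
  | succ n ih =>
    intro φ hG u w l hl hchain hu hw
    match l with
    | [] =>
      simp only [List.nil_append, List.Chain, List.chain_cons] at hchain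
      exact descend_single G τ ψ e₁ e₂ e₃ x hK hτ hG hchain.1 hu hw
    | b :: t =>
      simp only [List.cons_append, List.Chain, List.chain_cons] at hchain
      obtain ⟨hub, hchain'⟩ := hchain
      have huw : u ≠ w := fun h => by rw [h, ] at hu; linarith
      by_cases hmem : u ∈ b :: t
      · obtain ⟨l₁, l₂, hsplit⟩ := List.append_of_mem hmem
        have hch0 : List.Chain (Rrel G τ e₁ e₂ e₃ φ) u ((b :: t) ++ [w]) := by
          simp only [List.cons_append, List.Chain, List.chain_cons]
          exact ⟨hub, hchain'⟩
        rw [hsplit] at hch0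
        have hassoc : (l₁ ++ u :: l₂) ++ [w] = l₁ ++ u :: (l₂ ++ [w]) := by simp
        rw [hassoc] at hch0
        have hch2 := (List.isChain_cons_split.mp hch0).2
        have hlen : l₂.length ≤ n := by
          have := congrArg List.length hsplit
          simp at this
          simp at hl
          omega
        exact ih φ hG u w l₂ hlen hch2 hu hw
      · obtain ⟨φ₁, hG₁, hsame, hd⟩ := push_good G τ ψ e₁ e₂ e₃ x hτ hG hub
        have hub' : u ≠ b := G.ne_of_adj hub.1
        have ha : 6 ≤ dvg G τ φ u := Int.le_of_dvd hu (dvg_dvd G τ ψ e₁ e₂ e₃ x hK φ hG u)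
        by_cases hdb : dvg G τ φ b < 0
        · have hb : dvg G τ φ b ≤ -6 := by
            have h6 : (6 : ℤ) ≤ -dvg G τ φ b :=
              Int.le_of_dvd (by linarith) ((dvg_dvd G τ ψ e₁ e₂ e₃ x hK φ hG b).neg_right)
            linarith
          exact ⟨φ₁, hG₁, (Kk_push G τ φ φ₁ hub' hd ha).1 hb⟩
        · push_neg at hdb
          have hKeq : Kk G τ φ₁ = Kk G τ φ := (Kk_push G τ φ φ₁ hub' hd ha).2 hdb
          have hch1 : List.Chain (Rrel G τ e₁ e₂ e₃ φ₁) b (t ++ [w]) := by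
            refine chain_mono hchain' fun p q hp hq hpq => ?_
            have hne : s(p, q) ≠ s(u, b) := by
              intro hs
              rw [Sym2.eq_iff] at hs
              have hul : u ∉ b :: (t ++ [w]) := by
                intro hul
                rcases List.mem_cons.mp hul with h' | h'
                · exact hmem (by simp [h'])
                · rcases List.mem_append.mp h' with h'' | h''
                  · exact hmem (List.mem_cons_of_mem b h'')
                  · have huw' : u = w := by simpa using h''
                    rw [huw'] at hu; linarith
              rcases hs with ⟨h1, _⟩ | ⟨_, h2⟩
              · exact hul (h1 ▸ hp)
              · exact hul (h2 ▸ List.mem_cons_of_mem b hq)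
            obtain ⟨hpq1, hpq2, hpq3, hpq4, hpq5⟩ := hpq
            exact ⟨hpq1, hpq2, hpq3, hpq4, by rw [hsame _ hne]; exact hpq5⟩
          have hu1 : 0 < dvg G τ φ₁ b := by
            rw [hd b, if_neg (fun h => hub' h.symm), if_pos rfl]
            linarith
          have hw1 : dvg G τ φ₁ w < 0 := by
            have hwu : w ≠ u := fun h => huw h.symm
            have hwb : w ≠ b := fun h => by rw [h] at hw; linarith
            rw [hd w, if_neg hwu, if_neg hwb]
            linarith
          have hlt : t.length ≤ n := by simp at hl; omega
          obtain ⟨φ', hG', hK'⟩ := ih φ₁ hG₁ b w t hlt hch1 hu1 hw1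
          exact ⟨φ', hG', by omega⟩

end Stmt9Aux

/-- A `ℤ₆`-flow with prescribed values `1, x, -1-x` on the three edges at a
degree-3 vertex (all oriented out of, or all into, that vertex) of a bridgeless graph can
be turned into an integer nowhere-zero 6-flow with the same orientation and the same
prescribed values. -/
theorem stmt9 [Fintype V] (G : SimpleGraph V) (hbl : Bridgeless G)
    (v : V) (hdeg : (G.neighborSet v).ncard = 3)
    (e₁ e₂ e₃ : Sym2 V)
    (h₁ : e₁ ∈ G.incidenceSet v) (h₂ : e₂ ∈ G.incidenceSet v) (h₃ : e₃ ∈ G.incidenceSet v)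
    (hne₁₂ : e₁ ≠ e₂) (hne₁₃ : e₁ ≠ e₃) (hne₂₃ : e₂ ≠ e₃)
    (τ : V → Sym2 V → ℤ) (hτ : IsOrientation G allPos τ)
    (hdir : (τ v e₁ = -1 ∧ τ v e₂ = -1 ∧ τ v e₃ = -1) ∨
      (τ v e₁ = 1 ∧ τ v e₂ = 1 ∧ τ v e₃ = 1))
    (x : ℤ) (hx1 : 1 ≤ x) (hx4 : x ≤ 4)
    (ψ : Sym2 V → ZMod 6)
    (hK : ∀ w : V, (∑ z : V, if G.Adj w z then (τ w s(w, z) : ZMod 6) * ψ s(w, z) else 0) = 0)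
    (hnz : ∀ e ∈ G.edgeSet, ψ e ≠ 0)
    (hv1 : ψ e₁ = 1) (hv2 : ψ e₂ = (x : ZMod 6)) (hv3 : ψ e₃ = ((-1 - x : ℤ) : ZMod 6)) :
    ∃ φ' : Sym2 V → ℤ, IsFlow G allPos τ φ' ∧
      (∀ e ∈ G.edgeSet, 0 < |φ' e| ∧ |φ' e| < 6) ∧
      φ' e₁ = 1 ∧ φ' e₂ = x ∧ φ' e₃ = -1 - x := by
  classical
  obtain ⟨he₁E, hv₁⟩ := h₁
  obtain ⟨he₂E, hv₂⟩ := h₂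
  obtain ⟨he₃E, hv₃⟩ := h₃
  obtain ⟨a₁, he₁⟩ := Sym2.mem_iff_exists.mp hv₁
  obtain ⟨a₂, he₂⟩ := Sym2.mem_iff_exists.mp hv₂
  obtain ⟨a₃, he₃⟩ := Sym2.mem_iff_exists.mp hv₃
  have ha₁ : G.Adj v a₁ := G.mem_edgeSet.mp (he₁ ▸ he₁E)
  have ha₂ : G.Adj v a₂ := G.mem_edgeSet.mp (he₂ ▸ he₂E)
  have ha₃ : G.Adj v a₃ := G.mem_edgeSet.mp (he₃ ▸ he₃E)
  have h12 : a₁ ≠ a₂ := fun h => hne₁₂ (by rw [he₁, he₂, h])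
  have h13 : a₁ ≠ a₃ := fun h => hne₁₃ (by rw [he₁, he₃, h])
  have h23 : a₂ ≠ a₃ := fun h => hne₂₃ (by rw [he₂, he₃, h])
  have htriple : ({a₁, a₂, a₃} : Set V).ncard = 3 :=
    Set.ncard_eq_three.mpr ⟨a₁, a₂, a₃, h12, h13, h23, rfl⟩
  have hsetnbr : ({a₁, a₂, a₃} : Set V) = G.neighborSet v := by
    refine Set.eq_of_subset_of_ncard_le ?_ (le_of_eq (hdeg.trans htriple.symm)) (Set.toFinite _)
    intro z hz
    rcases hz with rfl | rfl | rfl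
    · exact ha₁
    · exact ha₂
    · exact ha₃
  have hnbr : ∀ z, G.Adj v z → z = a₁ ∨ z = a₂ ∨ z = a₃ := by
    intro z hz
    have hzmem : z ∈ ({a₁, a₂, a₃} : Set V) := by rw [hsetnbr]; exact hz
    simpa using hzmem
  obtain ⟨ε, hε, hτv⟩ : ∃ ε : ℤ, (ε = 1 ∨ ε = -1) ∧ (τ v e₁ = ε ∧ τ v e₂ = ε ∧ τ v e₃ = ε) := by
    rcases hdir with ⟨hd1, hd2, hd3⟩ | ⟨hd1, hd2, hd3⟩
    · exact ⟨-1, Or.inr rfl, hd1, hd2, hd3⟩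
    · exact ⟨1, Or.inl rfl, hd1, hd2, hd3⟩
  set φ₀ : Sym2 V → ℤ :=
    fun e => if e = e₁ then 1 else if e = e₂ then x else if e = e₃ then -1 - x
      else ((ψ e).val : ℤ) with hφ₀
  have hG₀ : Good G ψ e₁ e₂ e₃ x φ₀ := by
    have hp1 : φ₀ e₁ = 1 := by
      simp only [hφ₀]
      split_ifs with h1 h2 h3 <;> try rfl
      all_goals simp_all
    have hp2 : φ₀ e₂ = x := by
      simp only [hφ₀]
      split_ifs with h1 h2 h3 <;> try rfl
      all_goals simp_all
    have hp3 : φ₀ e₃ = -1 - x := by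
      simp only [hφ₀]
      split_ifs with h1 h2 h3 <;> try rfl
      all_goals simp_all
    refine ⟨?_, hp1, hp2, hp3⟩
    intro e he
    by_cases hh1 : e = e₁
    · have hval : φ₀ e = 1 := by
        simp only [hφ₀]
        split_ifs with h1 <;> simp_all
      rw [hval]
      refine ⟨by rw [hh1, hv1]; norm_num, by norm_num⟩
    · by_cases hh2 : e = e₂
      · have hval : φ₀ e = x := by
          simp only [hφ₀]
          split_ifs with h1 h2 <;> simp_all
        rw [hval]
        refine ⟨by rw [hh2, hv2], ?_, ?_⟩
        · rw [abs_of_nonneg (by linarith)]; linarith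
        · rw [abs_of_nonneg (by linarith)]; linarith
      · by_cases hh3 : e = e₃
        · have hval : φ₀ e = -1 - x := by
            simp only [hφ₀]
            split_ifs with h1 h2 h3 <;> simp_all
          rw [hval]
          refine ⟨by rw [hh3, hv3], ?_, ?_⟩
          · rw [abs_of_nonpos (by linarith)]; linarith
          · rw [abs_of_nonpos (by linarith)]; linarith
        · have hval : φ₀ e = ((ψ e).val : ℤ) := by
            simp only [hφ₀]
            split_ifs with h1 h2 h3 <;> simp_all
          rw [hval]
          have hval_lt : (ψ e).val < 6 := ZMod.val_lt (ψ e)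
          have hval_ne : (ψ e).val ≠ 0 := by
            intro h
            exact hnz e he (by rwa [← ZMod.val_eq_zero])
          have h0 : (0 : ℤ) < ((ψ e).val : ℤ) := by
            exact_mod_cast Nat.pos_of_ne_zero hval_ne
          have h6 : ((ψ e).val : ℤ) < 6 := by exact_mod_cast hval_lt
          refine ⟨?_, ?_, ?_⟩
          · push_cast [ZMod.natCast_val, ZMod.cast_id]
            ring_nf
          · rw [abs_of_nonneg (le_of_lt h0)]; exact h0
          · rw [abs_of_nonneg (le_of_lt h0)]; exact h6
  set T : Set ℕ := {n : ℕ | ∃ φ, Good G ψ e₁ e₂ e₃ x φ ∧ Kk G τ φ = n} with hT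
  have hNE : T.Nonempty := ⟨Kk G τ φ₀, φ₀, hG₀, rfl⟩
  obtain ⟨φm, hGm, hKm⟩ := Nat.sInf_mem hNE
  by_cases hz : Kk G τ φm = 0
  · have hz' : ∑ w : V, (dvg G τ φm w).natAbs = 0 := hz
    have hall : ∀ w, dvg G τ φm w = 0 := by
      intro w
      exact Int.natAbs_eq_zero.mp (Finset.sum_eq_zero_iff.mp hz' w (Finset.mem_univ w))
    exact ⟨φm, ⟨hτ, fun w => hall w⟩, fun e he => (hGm.1 e he).2, hGm.2.1, hGm.2.2.1, hGm.2.2.2⟩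
  · exfalso
    have hdvd : ∀ w, (6 : ℤ) ∣ dvg G τ φm w := dvg_dvd G τ ψ e₁ e₂ e₃ x hK φm hGm
    obtain ⟨u, hu⟩ := exists_pos G τ hτ φm hz
    obtain ⟨w, hRTG, hw⟩ := reach G τ ψ e₁ e₂ e₃ x hτ v a₁ a₂ a₃ he₁ he₂ he₃ ha₁ ha₂ ha₃
      h12 h13 h23 hnbr ε hε hτv hx1 hx4 φm hGm hdvd u hu
    obtain ⟨l, hchain, hlast⟩ := List.exists_isChain_cons_of_relationReflTransGen hRTG
    have huw : u ≠ w := fun h => by rw [← h] at hw; linarith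
    have hlne : l ≠ [] := by
      rintro rfl
      exact huw (by simpa using hlast)
    rw [List.getLast_cons hlne] at hlast
    have hdrop : l.dropLast ++ [w] = l := by
      rw [← hlast]
      exact List.dropLast_append_getLast hlne
    have hchain' : List.Chain (Rrel G τ e₁ e₂ e₃ φm) u (l.dropLast ++ [w]) := by
      rw [hdrop]; exact hchain
    obtain ⟨φ', hG', hK'⟩ := descend G τ ψ e₁ e₂ e₃ x hK hτ l.dropLast.length φm hGm
      u w l.dropLast le_rfl hchain' hu hw
    have hle : sInf T ≤ Kk G τ φ' := Nat.sInf_le ⟨φ', hG', rfl⟩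
    omega
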